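/- Let x, y, z be elements in a commutative ring. The determinant of the n×n matrix whose superdiagonal entries are x, whose subdiagonal entries are y, whose (n,n) entry is z, and all other entries zero, equals (−1)^{n/2} x^{n/2} y^{n/2} if n is even, and equals (−1)^{(n−1)/2} x^{(n−1)/2} y^{(n−1)/2} z if n is odd. -/
import Mathlib

theorem offdiag_aux {R : Type*} [CommRing R] (x y z : R) :
    ∀ n (A : Matrix (Fin n) (Fin n) R),
    (∀ i j : Fin n, A i j =
      if (i : ℕ) = n - 1 ∧ (j : ℕ) = n - 1 then z
      else if (i : ℕ) + 1 = (j : ℕ) then x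
      else if (j : ℕ) + 1 = (i : ℕ) then y else 0) →
    A.det = if Even n then (-1 : R) ^ (n / 2) * x ^ (n / 2) * y ^ (n / 2)
      else (-1 : R) ^ ((n - 1) / 2) * x ^ ((n - 1) / 2) * y ^ ((n - 1) / 2) * z := by
  intro n
  induction n using Nat.strong_induction_on with
  | _ n ih =>
  match n with
  | 0 => intro A hA; simp [Matrix.det_fin_zero]
  | 1 => intro A hA; simp [Matrix.det_fin_one, hA]
  | (n+2) =>
    intro A hA
    rw [Matrix.det_succ_row_zero]
    have h0 : ∀ j : Fin (n+2), A 0 j = if j = 1 then x else 0 := by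
      intro j
      rw [hA]
      rcases j with ⟨j, hj⟩
      simp only [Fin.val_zero, Fin.ext_iff, Fin.val_one, Nat.add_sub_cancel]
      split_ifs <;> first | rfl | omega | simp_all
    have hs1 : (1 : Fin (n+2)).succAbove 0 = 0 := by
      rw [Fin.succAbove_of_castSucc_lt]
      · rfl
      · simp [Fin.lt_def]
    have hs2 : ∀ j : Fin n, (1 : Fin (n+2)).succAbove (Fin.succ j) = (Fin.succ j).succ := by
      intro j
      rw [Fin.succAbove_of_le_castSucc]
      simp [Fin.le_def]
    rw [Finset.sum_eq_single (1 : Fin (n+2))]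
    · set B := A.submatrix Fin.succ (Fin.succAbove 1) with hB
      rw [Matrix.det_succ_column_zero B]
      have hB0 : ∀ i : Fin (n+1), B i 0 = if i = 0 then y else 0 := by
        intro i
        show A i.succ ((1 : Fin (n+2)).succAbove 0) = _
        rw [hs1, hA]
        rcases i with ⟨i, hi⟩
        simp only [Fin.val_succ, Fin.val_zero, Nat.add_sub_cancel, Fin.ext_iff]
        split_ifs <;> first | rfl | omega | simp_all
      rw [Finset.sum_eq_single (0 : Fin (n+1))]
      · have hC : (B.submatrix (Fin.succAbove 0) Fin.succ).det =
            if Even n then (-1 : R) ^ (n / 2) * x ^ (n / 2) * y ^ (n / 2)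
              else (-1 : R) ^ ((n - 1) / 2) * x ^ ((n - 1) / 2) * y ^ ((n - 1) / 2) * z := by
          apply ih n (by omega)
          intro i j
          show A (Fin.succ ((0 : Fin (n+1)).succAbove i)) ((1 : Fin (n+2)).succAbove (Fin.succ j)) = _
          rw [hs2 j, Fin.succAbove_zero, hA]
          rcases i with ⟨i, hi⟩
          rcases j with ⟨j, hj⟩
          simp only [Fin.val_succ, Nat.add_sub_cancel, Fin.ext_iff]
          split_ifs <;> first | rfl | omega | simp_all
        rw [hC, h0, hB0]
        simp only [if_pos rfl, if_true, Fin.val_one, Fin.val_zero]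
        rcases Nat.even_or_odd n with he | ho
        · have h2 : Even (n+2) := by
            rcases he with ⟨k, hk⟩; exact ⟨k+1, by omega⟩
          rw [if_pos he, if_pos h2]
          have h4 : (n+2)/2 = n/2 + 1 := by omega
          rw [h4]
          ring
        · obtain ⟨k, hk⟩ := ho
          have h2 : ¬ Even n := by rintro ⟨m, hm⟩; omega
          have h3 : ¬ Even (n+2) := by rintro ⟨m, hm⟩; omega
          rw [if_neg h2, if_neg h3]
          have h4 : (n+2-1)/2 = (n-1)/2 + 1 := by omega
          rw [h4]
          ring
      · intro b _ hb
        rw [hB0 b, if_neg hb]; ring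
      · intro h; exact absurd (Finset.mem_univ _) h
    · intro b _ hb
      rw [h0 b, if_neg hb]; ring
    · intro h; exact absurd (Finset.mem_univ _) h

/-- The determinant of the `n × n` matrix with superdiagonal
entries `x`, subdiagonal entries `y`, `(n,n)` entry `z` and all other entries zero
is `(-1)^(n/2) x^(n/2) y^(n/2)` if `n` is even, and
`(-1)^((n-1)/2) x^((n-1)/2) y^((n-1)/2) z` if `n` is odd. -/
theorem offdiag_det_with_corner {R : Type*} [CommRing R] (x y z : R) (n : ℕ)
    (A : Matrix (Fin n) (Fin n) R)
    (hA : ∀ i j : Fin n, A i j =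
      if (i : ℕ) = n - 1 ∧ (j : ℕ) = n - 1 then z
      else if (i : ℕ) + 1 = (j : ℕ) then x
      else if (j : ℕ) + 1 = (i : ℕ) then y else 0) :
    A.det = if Even n then (-1 : R) ^ (n / 2) * x ^ (n / 2) * y ^ (n / 2)
      else (-1 : R) ^ ((n - 1) / 2) * x ^ ((n - 1) / 2) * y ^ ((n - 1) / 2) * z :=
  offdiag_aux x y z n A hA
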